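/- In the d-dimensional lattice graph, for each u in the localized solution space 𝒰^{(t)} and each node p, define J_p^u ∈ ℝ^{E_t} by J_p^u(e) = u_p − u_q if e = pq ∈ E_t and 0 otherwise, where E_t is the set of edges between slices (L_t ∪ K_t) and (L_{t+1} ∪ K_{t+1}). Then the orthogonal complement in ℝ^{E_t} of span{ J_p^u : u ∈ 𝒰^{(t)}, p ∈ L_t ∪ L_{t+1} ∪ J_t } is trivial: span{ J_p^u }^⊥ = {0}. -/

import Mathlib

noncomputable section
open Classical Finset

namespace DiscreteCalderon

/-- Vertices of the ambient lattice `ℤ^d`. -/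
abbrev V (d : ℕ) := Fin d → ℤ

/-- Interior vertex set `D = {x : 1 ≤ x_i ≤ n}`. -/
def Dset (d n : ℕ) : Set (V d) := {x | ∀ i, 1 ≤ x i ∧ x i ≤ (n : ℤ)}

/-- ℓ¹ distance. -/
def dist1 {d : ℕ} (p q : V d) : ℤ := ∑ i, |p i - q i|

/-- Boundary vertex set `∂D`: vertices at ℓ¹ distance 1 from `D`. -/
def Bset (d n : ℕ) : Set (V d) := {p | p ∉ Dset d n ∧ ∃ q ∈ Dset d n, dist1 p q = 1}

/-- All vertices of the graph, `D ∪ ∂D`. -/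
def Vset (d n : ℕ) : Set (V d) := Dset d n ∪ Bset d n

/-- Adjacency of the lattice graph: ℓ¹ distance 1, both endpoints vertices,
not both on the boundary. -/
def Adj (d n : ℕ) (p q : V d) : Prop :=
  dist1 p q = 1 ∧ p ∈ Vset d n ∧ q ∈ Vset d n ∧ (p ∈ Dset d n ∨ q ∈ Dset d n)

/-- A finite box containing all vertices. -/
def box (d n : ℕ) : Finset (V d) :=
  Fintype.piFinset (fun _ : Fin d => Finset.Icc (0 : ℤ) ((n : ℤ) + 1))

/-- Neighbours of `p` in the graph, as a finite set. -/
def nbr (d n : ℕ) (p : V d) : Finset (V d) := (box d n).filter (fun q => Adj d n p q)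

/-- Interior neighbours of `p`. -/
def nbrD (d n : ℕ) (p : V d) : Finset (V d) := (nbr d n p).filter (fun q => q ∈ Dset d n)

/-- The discrete (weighted) Laplacian `(Δ_γ u)_p = ∑_{q∈N(p)} γ_{qp}(u_q - u_p)`. -/
def lap (d n : ℕ) (γ : V d → V d → ℝ) (u : V d → ℝ) (p : V d) : ℝ :=
  ∑ q ∈ nbr d n p, γ q p * (u q - u p)

/-- The boundary current `(D_γ u)_p = ∑_{q∈N(p)∩D} γ_{pq}(u_q - u_p)`
(there is exactly one interior neighbour of a boundary node). -/
def cur (d n : ℕ) (γ : V d → V d → ℝ) (u : V d → ℝ) (p : V d) : ℝ :=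
  ∑ q ∈ nbrD d n p, γ p q * (u q - u p)

/-- A strictly positive symmetric conductivity. -/
def GoodCond (d n : ℕ) (γ : V d → V d → ℝ) : Prop :=
  (∀ p q, γ p q = γ q p) ∧ ∀ p q, Adj d n p q → 0 < γ p q

/-- The coordinate sum of a lattice point. -/
def sum1 {d : ℕ} (x : V d) : ℤ := ∑ i, x i

/-- Interior diagonal slice `L_t`. -/
def L (d n : ℕ) (t : ℤ) : Set (V d) := {x | x ∈ Dset d n ∧ sum1 x = t}

/-- `L_t^S = ∪_{ℓ ≤ t} L_ℓ`. -/
def LS (d n : ℕ) (t : ℤ) : Set (V d) := {x | x ∈ Dset d n ∧ sum1 x ≤ t}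

/-- Boundary diagonal slice `K_t`. -/
def K (d n : ℕ) (t : ℤ) : Set (V d) := {x | x ∈ Bset d n ∧ sum1 x = t}

/-- `K_t^- = {x ∈ K_t : min_i x_i = 0}`. -/
def Km (d n : ℕ) (t : ℤ) : Set (V d) := {x | x ∈ K d n t ∧ ∃ i, x i = 0}

/-- `K_t^+ = {x ∈ K_t : max_i x_i = n+1}`. -/
def Kp (d n : ℕ) (t : ℤ) : Set (V d) := {x | x ∈ K d n t ∧ ∃ i, x i = (n : ℤ) + 1}

/-- `K_t^{S-} = ∪_{ℓ ≤ t} K_ℓ^-`. -/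
def KSm (d n : ℕ) (t : ℤ) : Set (V d) := {x | x ∈ Bset d n ∧ sum1 x ≤ t ∧ ∃ i, x i = 0}

/-- `K_t^{S+} = ∪_{ℓ ≤ t} K_ℓ^+`. -/
def KSp (d n : ℕ) (t : ℤ) : Set (V d) := {x | x ∈ Bset d n ∧ sum1 x ≤ t ∧ ∃ i, x i = (n : ℤ) + 1}

/-- The lower boundary region `J_t^S = K_t^{S-} ∪ K_{t+1}^{S+}`. -/
def JS (d n : ℕ) (t : ℤ) : Set (V d) := KSm d n t ∪ KSp d n (t + 1)

/-- `J_t = K_t^- ∪ K_{t+1}^+`. -/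
def Jslice (d n : ℕ) (t : ℤ) : Set (V d) := Km d n t ∪ Kp d n (t + 1)

/-- `u` is the γ-harmonic extension of boundary data `φ` (zero-extension convention
outside `D ∪ ∂D`). -/
def IsSol (d n : ℕ) (γ : V d → V d → ℝ) (φ u : V d → ℝ) : Prop :=
  (∀ p, p ∉ Vset d n → u p = 0) ∧
  (∀ p ∈ Dset d n, lap d n γ u p = 0) ∧
  (∀ p ∈ Bset d n, u p = φ p)

/-- The Laplacian row vector `v_p`. -/
def vrow (d n : ℕ) (γ : V d → V d → ℝ) (p : V d) : V d → ℝ := fun q =>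
  if Adj d n p q then γ p q
  else if q = p then -(∑ r ∈ nbr d n p, γ p r) else 0

/-- Restriction of a function to a set (zero outside). -/
def rst {d : ℕ} (S : Set (V d)) (f : V d → ℝ) : V d → ℝ := fun q => if q ∈ S then f q else 0

/-- Euclidean inner product of (vertex-supported) functions. -/
def dot (d n : ℕ) (f g : V d → ℝ) : ℝ := ∑ p ∈ box d n, f p * g p

/-- The localized solution space `𝒰^{(t)}`: restrictions to `L_t^S ∪ J_t^S` of
harmonic extensions of boundary potentials in `ker T₁^{(t)}`. -/
def Uset (d n : ℕ) (γ : V d → V d → ℝ) (t : ℤ) : Set (V d → ℝ) :=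
  {u | (∀ p, p ∉ LS d n t ∪ JS d n t → u p = 0) ∧
    ∃ φ w : V d → ℝ, (∀ p, p ∉ JS d n t → φ p = 0) ∧ IsSol d n γ φ w ∧
      (∀ p ∈ L d n (t + 1), w p = 0) ∧ ∀ p ∈ LS d n t ∪ JS d n t, u p = w p}

/-- The set `E_t` of edges between the consecutive layers:
`E(K_t^-, L_{t+1}) ∪ E(L_t, K_{t+1}^+) ∪ E(L_t, L_{t+1})`. -/
def EdgeT (d n : ℕ) (t : ℤ) (p q : V d) : Prop :=
  Adj d n p q ∧
    ((p ∈ Km d n t ∧ q ∈ L d n (t + 1)) ∨ (q ∈ Km d n t ∧ p ∈ L d n (t + 1)) ∨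
     (p ∈ L d n t ∧ q ∈ Kp d n (t + 1)) ∨ (q ∈ L d n t ∧ p ∈ Kp d n (t + 1)) ∨
     (p ∈ L d n t ∧ q ∈ L d n (t + 1)) ∨ (q ∈ L d n t ∧ p ∈ L d n (t + 1)))

/-- The edge vector `J_p^u ∈ ℝ^{E_t}`, `J_p^u(pq) = u_p - u_q` on edges of `E_t`
incident to `p`, and `0` otherwise (as a symmetric function of edge endpoints). -/
def Jvec (d n : ℕ) (t : ℤ) (u : V d → ℝ) (p : V d) : V d → V d → ℝ := fun a b =>
  if EdgeT d n t a b then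
    (if a = p then u a - u b else if b = p then u b - u a else 0)
  else 0

/-- Inner product of edge functions. -/
def dotE (d n : ℕ) (f g : V d → V d → ℝ) : ℝ :=
  ∑ p ∈ box d n, ∑ q ∈ box d n, f p q * g p q


/-! ### Auxiliary material for the proof -/

open scoped RealInnerProductSpace

section Dual

lemma dual_span {ι κ : Type} [Fintype ι] [Fintype κ] (v : κ → ι → ℝ) (z : ι → ℝ)
    (h : ∀ x : ι → ℝ, (∀ k, ∑ i, v k i * x i = 0) → ∑ i, z i * x i = 0) :
    ∃ α : κ → ℝ, ∀ i, z i = ∑ k, α k * v k i := by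
  let E := EuclideanSpace ℝ ι
  let e : (ι → ℝ) → E := (WithLp.equiv 2 (ι → ℝ)).symm
  let K : Submodule ℝ E := Submodule.span ℝ (Set.range fun k => e (v k))
  have hz : e z ∈ K := by
    rw [← Submodule.orthogonal_orthogonal K]
    intro y hy
    have h1 : ∀ k, ⟪e (v k), y⟫ = 0 := fun k =>
      (Submodule.mem_orthogonal K y).1 hy _ (Submodule.subset_span ⟨k, rfl⟩)
    have h2 : ∑ i, z i * y i = 0 := by
      apply h
      intro k
      have := h1 k
      change ⟪(WithLp.toLp 2 (v k) : EuclideanSpace ℝ ι), y⟫ = 0 at this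
      simpa [PiLp.inner_apply, e, mul_comm] using this
    show ⟪y, e z⟫ = 0
    rw [real_inner_comm]
    change ⟪(WithLp.toLp 2 z : EuclideanSpace ℝ ι), y⟫ = 0
    simpa [PiLp.inner_apply, e, mul_comm] using h2
  rw [Submodule.mem_span_range_iff_exists_fun] at hz
  obtain ⟨α, hα⟩ := hz
  refine ⟨α, fun i => ?_⟩
  have hα' : (∑ k, α k • v k : ι → ℝ) = z := by
    have := congrArg WithLp.ofLp hα
    rw [WithLp.ofLp_sum] at this
    exact this
  have h3 := congrFun hα' i
  simp only [Finset.sum_apply, Pi.smul_apply, smul_eq_mul] at h3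
  exact h3.symm

lemma dual_surj {ι κ : Type} [Fintype ι] [DecidableEq ι] [Fintype κ] (v : κ → ι → ℝ)
    (ind : ∀ y : κ → ℝ, (∀ i, ∑ k, y k * v k i = 0) → ∀ k, y k = 0) (b : κ → ℝ) :
    ∃ x : ι → ℝ, ∀ k, ∑ i, v k i * x i = b k := by
  let E := EuclideanSpace ℝ ι
  let F := EuclideanSpace ℝ κ
  let T : E →ₗ[ℝ] F :=
    { toFun := fun x => (WithLp.toLp 2 (fun k => ∑ i, v k i * x i) : F)
      map_add' := by
        intro x y; ext k
        show ∑ i, v k i * (x i + y i) = (∑ i, v k i * x i) + ∑ i, v k i * y i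
        simp [mul_add, Finset.sum_add_distrib]
      map_smul' := by
        intro c x; ext k
        show ∑ i, v k i * (c * x i) = c * ∑ i, v k i * x i
        rw [Finset.mul_sum]
        exact Finset.sum_congr rfl fun i _ => by ring }
  have hrange : LinearMap.range T = ⊤ := by
    by_contra hne
    have hne2 : (LinearMap.range T)ᗮ ≠ ⊥ := by
      intro hbot
      exact hne (by simpa using congrArg Submodule.orthogonal hbot)
    obtain ⟨y, hy, hy0⟩ := Submodule.exists_mem_ne_zero_of_ne_bot hne2
    have hyk : ∀ k, y k = 0 := by
      apply ind
      intro i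
      have := (Submodule.mem_orthogonal _ y).1 hy (T (EuclideanSpace.single i 1)) ⟨_, rfl⟩
      have h2 : ∑ k, (∑ j, v k j * (EuclideanSpace.single i (1:ℝ)) j) * y k = 0 := by
        change ⟪(WithLp.toLp 2 (fun k => ∑ j, v k j * (EuclideanSpace.single i (1:ℝ)) j) : EuclideanSpace ℝ κ), y⟫ = 0 at this
        simpa [PiLp.inner_apply, T, mul_comm] using this
      simpa [EuclideanSpace.single_apply, mul_comm] using h2
    exact hy0 (by ext k; exact hyk k)
  obtain ⟨x, hx⟩ := (LinearMap.range_eq_top.1 hrange) (WithLp.toLp 2 b : F)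
  exact ⟨x, fun k => congrFun (congrArg WithLp.ofLp hx) k⟩

end Dual

section Geometry

variable {d n : ℕ}

/-- Standard basis vector. -/
def eI (d : ℕ) (i : Fin d) : V d := fun j => if j = i then 1 else 0

lemma add_eI_apply (p : V d) (i j : Fin d) :
    (p + eI d i) j = p j + if j = i then 1 else 0 := rfl

lemma sub_eI_apply (p : V d) (i j : Fin d) :
    (p - eI d i) j = p j - if j = i then 1 else 0 := rfl

lemma sum1_add_eI (p : V d) (i : Fin d) : sum1 (p + eI d i) = sum1 p + 1 := by
  unfold sum1
  simp only [add_eI_apply, Finset.sum_add_distrib, Finset.sum_ite_eq' Finset.univ i,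
    Finset.mem_univ, if_true]

lemma sum1_sub_eI (p : V d) (i : Fin d) : sum1 (p - eI d i) = sum1 p - 1 := by
  unfold sum1
  simp only [sub_eI_apply, Finset.sum_sub_distrib, Finset.sum_ite_eq' Finset.univ i,
    Finset.mem_univ, if_true]

lemma sub_eI_eq_iff (p q : V d) (i : Fin d) : q = p - eI d i ↔ p = q + eI d i := by
  constructor <;> intro h <;> [skip; skip] <;> (subst h; funext j; simp [add_eI_apply, sub_eI_apply])

lemma dist1_comm (p q : V d) : dist1 p q = dist1 q p := by
  unfold dist1; exact Finset.sum_congr rfl fun i _ => abs_sub_comm _ _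

lemma dist1_self (p : V d) : dist1 p p = 0 := by simp [dist1]

lemma dist1_add_eI (p : V d) (i : Fin d) : dist1 p (p + eI d i) = 1 := by
  unfold dist1
  have : ∀ j, |p j - (p + eI d i) j| = if j = i then 1 else 0 := by
    intro j; rw [add_eI_apply]; split <;> simp
  simp only [this, Finset.sum_ite_eq' Finset.univ i, Finset.mem_univ, if_true]

lemma dist1_sub_eI (p : V d) (i : Fin d) : dist1 p (p - eI d i) = 1 := by
  unfold dist1
  have : ∀ j, |p j - (p - eI d i) j| = if j = i then 1 else 0 := by
    intro j; rw [sub_eI_apply]; split <;> simp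
  simp only [this, Finset.sum_ite_eq' Finset.univ i, Finset.mem_univ, if_true]

lemma dist1_eq_one {p q : V d} (h : dist1 p q = 1) :
    (∃ i, q = p + eI d i) ∨ (∃ i, q = p - eI d i) := by
  have hne : ∃ i, p i ≠ q i := by
    by_contra hc
    push_neg at hc
    rw [show q = p from (funext fun j => (hc j).symm)] at h
    rw [dist1_self] at h; exact one_ne_zero h.symm
  obtain ⟨i, hi⟩ := hne
  have h1 : (1:ℤ) ≤ |p i - q i| := Int.one_le_abs (sub_ne_zero.2 hi)
  have hsplit : |p i - q i| + ∑ j ∈ Finset.univ.erase i, |p j - q j| = 1 := by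
    rw [Finset.add_sum_erase Finset.univ (fun j => |p j - q j|) (Finset.mem_univ i)]
    exact h
  have hrest : ∑ j ∈ Finset.univ.erase i, |p j - q j| = 0 := by
    have h2 : (0:ℤ) ≤ ∑ j ∈ Finset.univ.erase i, |p j - q j| :=
      Finset.sum_nonneg fun j _ => abs_nonneg _
    omega
  have hothers : ∀ j, j ≠ i → p j = q j := by
    intro j hj
    have := (Finset.sum_eq_zero_iff_of_nonneg (fun j _ => abs_nonneg (p j - q j))).1 hrest j
      (Finset.mem_erase.2 ⟨hj, Finset.mem_univ j⟩)
    have := abs_eq_zero.1 this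
    omega
  have habs : |p i - q i| = 1 := by omega
  rcases abs_eq (by norm_num : (0:ℤ) ≤ 1) |>.1 habs with hc | hc
  · right; exact ⟨i, funext fun j => by
      rw [sub_eI_apply]
      by_cases hj : j = i
      · subst hj; rw [if_pos rfl]; omega
      · simp only [if_neg hj]; rw [← hothers j hj]; ring⟩
  · left; exact ⟨i, funext fun j => by
      rw [add_eI_apply]
      by_cases hj : j = i
      · subst hj; rw [if_pos rfl]; omega
      · simp only [if_neg hj]; rw [← hothers j hj]; ring⟩

lemma sum1_of_dist1 {p q : V d} (h : dist1 p q = 1) :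
    sum1 q = sum1 p + 1 ∨ sum1 q = sum1 p - 1 := by
  rcases dist1_eq_one h with ⟨i, rfl⟩ | ⟨i, rfl⟩
  · left; exact sum1_add_eI p i
  · right; exact sum1_sub_eI p i

lemma mem_box_iff {x : V d} : x ∈ box d n ↔ ∀ i, 0 ≤ x i ∧ x i ≤ (n:ℤ) + 1 := by
  unfold box
  rw [Fintype.mem_piFinset]
  simp only [Finset.mem_Icc]

lemma dset_sub_box {x : V d} (h : x ∈ Dset d n) : x ∈ box d n := by
  rw [mem_box_iff]; intro i; have := h i; omega

lemma bset_spec {p : V d} (hp : p ∈ Bset d n) :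
    ∃ i, ((p i = 0 ∧ p + eI d i ∈ Dset d n) ∨ (p i = (n:ℤ) + 1 ∧ p - eI d i ∈ Dset d n)) ∧
      ∀ j, j ≠ i → (1 ≤ p j ∧ p j ≤ (n:ℤ)) := by
  obtain ⟨hnd, q, hq, hdist⟩ := hp
  rcases dist1_eq_one hdist with ⟨i, rfl⟩ | ⟨i, rfl⟩
  · -- q = p + eI i ∈ D
    refine ⟨i, ?_, ?_⟩
    · left
      constructor
      · have h1 := hq i
        rw [add_eI_apply, if_pos rfl] at h1
        have h2 : ¬ (1 ≤ p i ∧ p i ≤ (n:ℤ)) := by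
          intro hc
          exact hnd (fun j => by
            by_cases hj : j = i
            · subst hj; exact hc
            · have := hq j; rwa [add_eI_apply, if_neg hj, add_zero] at this)
        omega
      · exact hq
    · intro j hj
      have := hq j; rwa [add_eI_apply, if_neg hj, add_zero] at this
  · refine ⟨i, ?_, ?_⟩
    · right
      constructor
      · have h1 := hq i
        rw [sub_eI_apply, if_pos rfl] at h1
        have h2 : ¬ (1 ≤ p i ∧ p i ≤ (n:ℤ)) := by
          intro hc
          exact hnd (fun j => by
            by_cases hj : j = i
            · subst hj; exact hc
            · have := hq j; rwa [sub_eI_apply, if_neg hj, sub_zero] at this)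
        omega
      · exact hq
    · intro j hj
      have := hq j; rwa [sub_eI_apply, if_neg hj, sub_zero] at this

lemma bset_sub_box {x : V d} (h : x ∈ Bset d n) : x ∈ box d n := by
  obtain ⟨i, hcase, hrest⟩ := bset_spec h
  rw [mem_box_iff]
  intro j
  by_cases hj : j = i
  · subst hj; rcases hcase with ⟨h0, _⟩ | ⟨h0, _⟩ <;> omega
  · have := hrest j hj; omega

lemma vset_sub_box {x : V d} (h : x ∈ Vset d n) : x ∈ box d n := by
  rcases h with h | h
  · exact dset_sub_box h
  · exact bset_sub_box h

lemma dset_not_bset {x : V d} (h : x ∈ Dset d n) : x ∉ Bset d n := fun hb => hb.1 h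

lemma adj_symm {p q : V d} (h : Adj d n p q) : Adj d n q p :=
  ⟨by rw [dist1_comm]; exact h.1, h.2.2.1, h.2.1, h.2.2.2.symm⟩

lemma adj_interior_up {p : V d} (hp : p ∈ Dset d n) (i : Fin d) : Adj d n p (p + eI d i) := by
  refine ⟨dist1_add_eI p i, Or.inl hp, ?_, Or.inl hp⟩
  by_cases hc : p i + 1 ≤ (n:ℤ)
  · left
    intro j
    rw [add_eI_apply]
    by_cases hj : j = i
    · have h9 := hp i; subst hj; rw [if_pos rfl]; omega
    · rw [if_neg hj, add_zero]; exact hp j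
  · right
    constructor
    · intro hD
      have := hD i
      rw [add_eI_apply, if_pos rfl] at this
      omega
    · exact ⟨p, hp, by rw [dist1_comm]; exact dist1_add_eI p i⟩

lemma adj_interior_dn {p : V d} (hp : p ∈ Dset d n) (i : Fin d) : Adj d n p (p - eI d i) := by
  refine ⟨dist1_sub_eI p i, Or.inl hp, ?_, Or.inl hp⟩
  by_cases hc : 1 ≤ p i - 1
  · left
    intro j
    rw [sub_eI_apply]
    by_cases hj : j = i
    · have h9 := hp i; subst hj; rw [if_pos rfl]; omega
    · rw [if_neg hj, sub_zero]; exact hp j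
  · right
    constructor
    · intro hD
      have := hD i
      rw [sub_eI_apply, if_pos rfl] at this
      omega
    · exact ⟨p, hp, by rw [dist1_comm]; exact dist1_sub_eI p i⟩

lemma eI_add_inj {p : V d} {i j : Fin d} (h : p + eI d i = p + eI d j) : i = j := by
  by_contra hij
  have := congrFun h i
  rw [add_eI_apply, add_eI_apply, if_pos rfl, if_neg hij] at this
  omega

lemma eI_sub_inj {p : V d} {i j : Fin d} (h : p - eI d i = p - eI d j) : i = j := by
  by_contra hij
  have := congrFun h i
  rw [sub_eI_apply, sub_eI_apply, if_pos rfl, if_neg hij] at this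
  omega

end Geometry


section Graph

variable {d n : ℕ} {t : ℤ}

lemma adj_interior_char {p q : V d} (hp : p ∈ Dset d n) :
    Adj d n p q ↔ (∃ i, q = p + eI d i) ∨ (∃ i, q = p - eI d i) := by
  constructor
  · intro h; exact dist1_eq_one h.1
  · rintro (⟨i, rfl⟩ | ⟨i, rfl⟩)
    exacts [adj_interior_up hp i, adj_interior_dn hp i]

lemma km_nbr {p : V d} {i : Fin d} (h0 : p i = 0) (hD : p + eI d i ∈ Dset d n)
    (hB : p ∈ Bset d n) {q : V d} :
    (Adj d n p q ∧ q ∈ Dset d n) ↔ q = p + eI d i := by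
  constructor
  · rintro ⟨hadj, hqD⟩
    rcases dist1_eq_one hadj.1 with ⟨j, rfl⟩ | ⟨j, rfl⟩
    · by_cases hj : j = i
      · subst hj; rfl
      · exfalso
        have := hqD i
        rw [add_eI_apply, if_neg (fun hc => hj hc.symm)] at this
        · omega
    · exfalso
      have := hqD i
      rw [sub_eI_apply] at this
      by_cases hj : i = j
      · subst hj; rw [if_pos rfl] at this; omega
      · rw [if_neg hj] at this; omega
  · rintro rfl
    exact ⟨⟨dist1_add_eI p i, Or.inr hB, Or.inl hD, Or.inr hD⟩, hD⟩

lemma kp_nbr {p : V d} {i : Fin d} (h0 : p i = (n:ℤ) + 1) (hD : p - eI d i ∈ Dset d n)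
    (hB : p ∈ Bset d n) {q : V d} :
    (Adj d n p q ∧ q ∈ Dset d n) ↔ q = p - eI d i := by
  constructor
  · rintro ⟨hadj, hqD⟩
    rcases dist1_eq_one hadj.1 with ⟨j, rfl⟩ | ⟨j, rfl⟩
    · exfalso
      have := hqD i
      rw [add_eI_apply] at this
      by_cases hj : i = j
      · subst hj; rw [if_pos rfl] at this; omega
      · rw [if_neg hj] at this; omega
    · by_cases hj : j = i
      · subst hj; rfl
      · exfalso
        have := hqD i
        rw [sub_eI_apply, if_neg (fun hc => hj hc.symm)] at this
        omega
  · rintro rfl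
    exact ⟨⟨dist1_sub_eI p i, Or.inr hB, Or.inl hD, Or.inr hD⟩, hD⟩

lemma km_struct {p : V d} (hp : p ∈ Km d n t) :
    ∃ i, p i = 0 ∧ p + eI d i ∈ Dset d n ∧ ∀ j, j ≠ i → 1 ≤ p j ∧ p j ≤ (n:ℤ) := by
  obtain ⟨⟨hB, hsum⟩, k, hk⟩ := hp
  obtain ⟨i, hcase, hrest⟩ := bset_spec hB
  have hki : k = i := by
    by_contra hc
    have := hrest k hc
    omega
  subst hki
  rcases hcase with ⟨h0, hD⟩ | ⟨h0, _⟩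
  · exact ⟨k, h0, hD, hrest⟩
  · exfalso; omega
lemma kp_struct {p : V d} (hp : p ∈ Kp d n t) :
    ∃ i, p i = (n:ℤ) + 1 ∧ p - eI d i ∈ Dset d n ∧ ∀ j, j ≠ i → 1 ≤ p j ∧ p j ≤ (n:ℤ) := by
  obtain ⟨⟨hB, hsum⟩, k, hk⟩ := hp
  obtain ⟨i, hcase, hrest⟩ := bset_spec hB
  have hki : k = i := by
    by_contra hc
    have := hrest k hc
    omega
  subst hki
  rcases hcase with ⟨h0, _⟩ | ⟨h0, hD⟩
  · exfalso; omega
  · exact ⟨k, h0, hD, hrest⟩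

lemma edgeT_symm {p q : V d} (h : EdgeT d n t p q) : EdgeT d n t q p := by
  obtain ⟨hadj, hc⟩ := h
  exact ⟨adj_symm hadj, by tauto⟩

lemma edgeT_irrefl (p : V d) : ¬ EdgeT d n t p p := by
  rintro ⟨⟨hdist, -⟩, -⟩
  rw [dist1_self] at hdist
  exact one_ne_zero hdist.symm

lemma edgeT_box {p q : V d} (h : EdgeT d n t p q) : q ∈ box d n :=
  vset_sub_box h.1.2.2.1

lemma mem_L_dset {p : V d} {s : ℤ} (h : p ∈ L d n s) : p ∈ Dset d n := h.1
lemma mem_L_sum {p : V d} {s : ℤ} (h : p ∈ L d n s) : sum1 p = s := h.2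

lemma L_up_mem {p : V d} (hp : p ∈ L d n t) (i : Fin d) :
    p + eI d i ∈ L d n (t+1) ∨ p + eI d i ∈ Kp d n (t+1) := by
  have hadj := adj_interior_up (n := n) hp.1 i
  have hsum : sum1 (p + eI d i) = t + 1 := by rw [sum1_add_eI, hp.2]
  rcases hadj.2.2.1 with hD | hB
  · left; exact ⟨hD, hsum⟩
  · right
    refine ⟨⟨hB, hsum⟩, ?_⟩
    obtain ⟨k, hcase, hrest⟩ := bset_spec hB
    rcases hcase with ⟨h0, _⟩ | ⟨h0, _⟩
    · exfalso
      have hk := hp.1 k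
      by_cases hki : k = i
      · subst hki; rw [add_eI_apply, if_pos rfl] at h0; omega
      · rw [add_eI_apply, if_neg hki] at h0; omega
    · exact ⟨k, h0⟩

lemma L_dn_mem {p : V d} (hp : p ∈ L d n (t+1)) (i : Fin d) :
    p - eI d i ∈ L d n t ∨ p - eI d i ∈ Km d n t := by
  have hadj := adj_interior_dn (n := n) hp.1 i
  have hsum : sum1 (p - eI d i) = t := by rw [sum1_sub_eI, hp.2]; ring
  rcases hadj.2.2.1 with hD | hB
  · left; exact ⟨hD, hsum⟩
  · right
    refine ⟨⟨hB, hsum⟩, ?_⟩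
    obtain ⟨k, hcase, hrest⟩ := bset_spec hB
    rcases hcase with ⟨h0, _⟩ | ⟨h0, _⟩
    · exact ⟨k, h0⟩
    · exfalso
      have hk := hp.1 k
      by_cases hki : k = i
      · subst hki; rw [sub_eI_apply, if_pos rfl] at h0; omega
      · rw [sub_eI_apply, if_neg hki] at h0; omega

lemma edgeT_Lt_char {p q : V d} (hp : p ∈ L d n t) :
    EdgeT d n t p q ↔ ∃ i, q = p + eI d i := by
  constructor
  · rintro ⟨hadj, hc⟩
    have hup : sum1 q = t + 1 := by
      rcases hc with ⟨h1, h2⟩ | ⟨h1, h2⟩ | ⟨h1, h2⟩ | ⟨h1, h2⟩ | ⟨h1, h2⟩ | ⟨h1, h2⟩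
      · exact absurd h1.1.1 (fun hB => hB.1 hp.1)
      · exact absurd (hp.2.symm.trans h2.2) (by omega)
      · exact h2.1.2
      · exact absurd h2.1.1 (fun hB => hB.1 hp.1)
      · exact h2.2
      · exact absurd (hp.2.symm.trans h2.2) (by omega)
    rcases dist1_eq_one hadj.1 with ⟨i, rfl⟩ | ⟨i, rfl⟩
    · exact ⟨i, rfl⟩
    · exfalso; rw [sum1_sub_eI, hp.2] at hup; omega
  · rintro ⟨i, rfl⟩
    refine ⟨adj_interior_up hp.1 i, ?_⟩
    rcases L_up_mem hp i with h | h
    · exact Or.inr (Or.inr (Or.inr (Or.inr (Or.inl ⟨hp, h⟩))))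
    · exact Or.inr (Or.inr (Or.inl ⟨hp, h⟩))

lemma edgeT_Lt1_char {p q : V d} (hp : p ∈ L d n (t+1)) :
    EdgeT d n t p q ↔ ∃ i, q = p - eI d i := by
  constructor
  · rintro ⟨hadj, hc⟩
    have hdn : sum1 q = t := by
      rcases hc with ⟨h1, h2⟩ | ⟨h1, h2⟩ | ⟨h1, h2⟩ | ⟨h1, h2⟩ | ⟨h1, h2⟩ | ⟨h1, h2⟩
      · exact absurd h1.1.1 (fun hB => hB.1 hp.1)
      · exact h1.1.2
      · exact absurd (hp.2.symm.trans h1.2) (by omega)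
      · exact absurd h2.1.1 (fun hB => hB.1 hp.1)
      · exact absurd (hp.2.symm.trans h1.2) (by omega)
      · exact h1.2
    rcases dist1_eq_one hadj.1 with ⟨i, rfl⟩ | ⟨i, rfl⟩
    · exfalso; rw [sum1_add_eI, hp.2] at hdn; omega
    · exact ⟨i, rfl⟩
  · rintro ⟨i, rfl⟩
    refine ⟨adj_interior_dn hp.1 i, ?_⟩
    rcases L_dn_mem hp i with h | h
    · exact Or.inr (Or.inr (Or.inr (Or.inr (Or.inr ⟨h, hp⟩))))
    · exact Or.inr (Or.inl ⟨h, hp⟩)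

lemma edgeT_Km_char {p q : V d} (hp : p ∈ Km d n t) {i : Fin d}
    (h0 : p i = 0) (hD : p + eI d i ∈ Dset d n) :
    EdgeT d n t p q ↔ q = p + eI d i := by
  have hB : p ∈ Bset d n := hp.1.1
  constructor
  · rintro ⟨hadj, hc⟩
    have hq : q ∈ Dset d n := by
      rcases hc with ⟨h1, h2⟩ | ⟨h1, h2⟩ | ⟨h1, h2⟩ | ⟨h1, h2⟩ | ⟨h1, h2⟩ | ⟨h1, h2⟩
      · exact h2.1
      · exact absurd h2.1 hB.1
      · exact absurd h1.1 hB.1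
      · exact absurd (hp.1.2.symm.trans h2.1.2) (by omega)
      · exact absurd h1.1 hB.1
      · exact absurd h2.1 hB.1
    exact (km_nbr h0 hD hB).1 ⟨hadj, hq⟩
  · rintro rfl
    have hq : p + eI d i ∈ L d n (t+1) := ⟨hD, by rw [sum1_add_eI, hp.1.2]⟩
    exact ⟨((km_nbr h0 hD hB).2 rfl).1, Or.inl ⟨hp, hq⟩⟩

lemma edgeT_Kp_char {p q : V d} (hp : p ∈ Kp d n (t+1)) {i : Fin d}
    (h0 : p i = (n:ℤ) + 1) (hD : p - eI d i ∈ Dset d n) :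
    EdgeT d n t p q ↔ q = p - eI d i := by
  have hB : p ∈ Bset d n := hp.1.1
  constructor
  · rintro ⟨hadj, hc⟩
    have hq : q ∈ Dset d n := by
      rcases hc with ⟨h1, h2⟩ | ⟨h1, h2⟩ | ⟨h1, h2⟩ | ⟨h1, h2⟩ | ⟨h1, h2⟩ | ⟨h1, h2⟩
      · exact absurd (hp.1.2.symm.trans h1.1.2) (by omega)
      · exact absurd h2.1 hB.1
      · exact absurd h1.1 hB.1
      · exact h1.1
      · exact absurd h1.1 hB.1
      · exact absurd h2.1 hB.1
    exact (kp_nbr h0 hD hB).1 ⟨hadj, hq⟩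
  · rintro rfl
    have hq : p - eI d i ∈ L d n t := ⟨hD, by rw [sum1_sub_eI, hp.1.2]; ring⟩
    exact ⟨((kp_nbr h0 hD hB).2 rfl).1, Or.inr (Or.inr (Or.inr (Or.inl ⟨hq, hp⟩)))⟩

end Graph


section Sums

variable {d n : ℕ} {t : ℤ}

/-- Row vector of the downward propagation matrix. -/
def rowv (d n : ℕ) (γ : V d → V d → ℝ) (p : V d) : V d → ℝ := fun q =>
  if Adj d n p q ∧ sum1 q = sum1 p - 1 then γ q p else 0

lemma box_filter_dn {p : V d} (hp : p ∈ Dset d n) :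
    (box d n).filter (fun q => Adj d n p q ∧ sum1 q = sum1 p - 1) =
      Finset.univ.image (fun i => p - eI d i) := by
  ext q
  rw [Finset.mem_filter, Finset.mem_image]
  constructor
  · rintro ⟨hbox, hadj, hsum⟩
    rcases dist1_eq_one hadj.1 with ⟨i, rfl⟩ | ⟨i, rfl⟩
    · exfalso; rw [sum1_add_eI] at hsum; omega
    · exact ⟨i, Finset.mem_univ i, rfl⟩
  · rintro ⟨i, -, rfl⟩
    have hadj := adj_interior_dn (n := n) hp i
    exact ⟨vset_sub_box hadj.2.2.1, hadj, sum1_sub_eI p i⟩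

lemma box_filter_up {p : V d} (hp : p ∈ Dset d n) :
    (box d n).filter (fun q => Adj d n p q ∧ sum1 q = sum1 p + 1) =
      Finset.univ.image (fun i => p + eI d i) := by
  ext q
  rw [Finset.mem_filter, Finset.mem_image]
  constructor
  · rintro ⟨hbox, hadj, hsum⟩
    rcases dist1_eq_one hadj.1 with ⟨i, rfl⟩ | ⟨i, rfl⟩
    · exact ⟨i, Finset.mem_univ i, rfl⟩
    · exfalso; rw [sum1_sub_eI] at hsum; omega
  · rintro ⟨i, -, rfl⟩
    have hadj := adj_interior_up (n := n) hp i
    exact ⟨vset_sub_box hadj.2.2.1, hadj, sum1_add_eI p i⟩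

lemma sum_dn {p : V d} (hp : p ∈ Dset d n) (F : V d → ℝ) :
    ∑ q ∈ box d n, (if Adj d n p q ∧ sum1 q = sum1 p - 1 then F q else 0) =
      ∑ i, F (p - eI d i) := by
  rw [← Finset.sum_filter, box_filter_dn hp,
    Finset.sum_image (fun i _ j _ h => eI_sub_inj h)]

lemma sum_up {p : V d} (hp : p ∈ Dset d n) (F : V d → ℝ) :
    ∑ q ∈ box d n, (if Adj d n p q ∧ sum1 q = sum1 p + 1 then F q else 0) =
      ∑ i, F (p + eI d i) := by
  rw [← Finset.sum_filter, box_filter_up hp,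
    Finset.sum_image (fun i _ j _ h => eI_add_inj h)]

lemma rowv_sum {γ : V d → V d → ℝ} {p : V d} (hp : p ∈ Dset d n) (F : V d → ℝ) :
    ∑ q ∈ box d n, rowv d n γ p q * F q = ∑ i, γ (p - eI d i) p * F (p - eI d i) := by
  have h1 : ∀ q ∈ box d n, rowv d n γ p q * F q =
      (if Adj d n p q ∧ sum1 q = sum1 p - 1 then γ q p * F q else 0) := by
    intro q hq; unfold rowv; split <;> simp
  rw [Finset.sum_congr rfl h1, sum_dn hp (fun q => γ q p * F q)]

lemma nbr_eq {p : V d} (hp : p ∈ Dset d n) :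
    nbr d n p = (Finset.univ.image fun i => p + eI d i) ∪
      (Finset.univ.image fun i => p - eI d i) := by
  ext q
  rw [Finset.mem_union, Finset.mem_image, Finset.mem_image]
  unfold nbr
  rw [Finset.mem_filter]
  constructor
  · rintro ⟨hbox, hadj⟩
    rcases dist1_eq_one hadj.1 with ⟨i, rfl⟩ | ⟨i, rfl⟩
    · exact Or.inl ⟨i, Finset.mem_univ i, rfl⟩
    · exact Or.inr ⟨i, Finset.mem_univ i, rfl⟩
  · rintro (⟨i, -, rfl⟩ | ⟨i, -, rfl⟩)
    · have hadj := adj_interior_up (n := n) hp i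
      exact ⟨vset_sub_box hadj.2.2.1, hadj⟩
    · have hadj := adj_interior_dn (n := n) hp i
      exact ⟨vset_sub_box hadj.2.2.1, hadj⟩

lemma updn_disj (p : V d) :
    Disjoint (Finset.univ.image fun i => p + eI d i)
      (Finset.univ.image fun i => p - eI d i) := by
  rw [Finset.disjoint_left]
  rintro q hq1 hq2
  obtain ⟨i, -, rfl⟩ := Finset.mem_image.1 hq1
  obtain ⟨j, -, hj⟩ := Finset.mem_image.1 hq2
  have h1 : sum1 (p + eI d i) = sum1 p + 1 := sum1_add_eI p i
  rw [← hj, sum1_sub_eI] at h1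
  omega

lemma lap_eq {γ : V d → V d → ℝ} {W : V d → ℝ} {p : V d} (hp : p ∈ Dset d n) :
    lap d n γ W p = (∑ i, γ (p + eI d i) p * (W (p + eI d i) - W p)) +
      ∑ i, γ (p - eI d i) p * (W (p - eI d i) - W p) := by
  unfold lap
  rw [nbr_eq hp, Finset.sum_union (updn_disj p),
    Finset.sum_image (fun i _ j _ h => eI_add_inj h),
    Finset.sum_image (fun i _ j _ h => eI_sub_inj h)]

lemma lap_add {γ : V d → V d → ℝ} (W F : V d → ℝ) (p : V d) :
    lap d n γ (fun x => W x + F x) p = lap d n γ W p + lap d n γ F p := by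
  unfold lap
  rw [← Finset.sum_add_distrib]
  exact Finset.sum_congr rfl fun q _ => by ring

lemma dotE_eq {u : V d → ℝ} {c : V d → V d → ℝ} {p : V d}
    (hcs : ∀ a b, c a b = c b a) (hp : p ∈ box d n) :
    dotE d n (Jvec d n t u p) c =
      2 * ∑ q ∈ box d n, (if EdgeT d n t p q then (u p - u q) * c p q else 0) := by
  unfold dotE Jvec
  have inner_eq : ∀ a ∈ box d n,
      (∑ b ∈ box d n, (if EdgeT d n t a b then
        (if a = p then u a - u b else if b = p then u b - u a else 0) else 0) * c a b) =
      if a = p then (∑ q ∈ box d n, (if EdgeT d n t p q then (u p - u q) * c p q else 0))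
        else (if EdgeT d n t p a then (u p - u a) * c p a else 0) := by
    intro a ha
    by_cases hap : a = p
    · subst hap
      rw [if_pos rfl]
      refine Finset.sum_congr rfl fun b hb => ?_
      by_cases he : EdgeT d n t a b
      · rw [if_pos he, if_pos rfl, if_pos he]
      · rw [if_neg he, if_neg he, zero_mul]
    · rw [if_neg hap]
      rw [Finset.sum_eq_single_of_mem p hp (fun b hb hbp => by
        rw [if_neg hap, if_neg hbp]
        split <;> ring)]
      rw [if_neg hap, if_pos rfl]
      by_cases he : EdgeT d n t p a
      · rw [if_pos (edgeT_symm he), if_pos he, hcs a p]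
      · rw [if_neg (fun hc => he (edgeT_symm hc)), if_neg he, zero_mul]
  rw [Finset.sum_congr rfl inner_eq]
  have split_eq : ∀ a ∈ box d n,
      (if a = p then (∑ q ∈ box d n, (if EdgeT d n t p q then (u p - u q) * c p q else 0))
        else (if EdgeT d n t p a then (u p - u a) * c p a else 0)) =
      (if a = p then (∑ q ∈ box d n, (if EdgeT d n t p q then (u p - u q) * c p q else 0)) else 0)
        + (if EdgeT d n t p a then (u p - u a) * c p a else 0) := by
    intro a ha
    by_cases hap : a = p
    · subst hap
      rw [if_pos rfl, if_pos rfl, if_neg (edgeT_irrefl a), add_zero]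
    · rw [if_neg hap, if_neg hap, zero_add]
  rw [Finset.sum_congr rfl split_eq, Finset.sum_add_distrib,
    Finset.sum_ite_eq' (box d n) p, if_pos hp]
  ring

end Sums


section Indep

variable {d n : ℕ} {t : ℤ}

def wgt (d n : ℕ) (i : Fin d) : ℤ := ((n:ℤ) + 2) ^ (d - 1 - (i:ℕ))

lemma wgt_lt {i j : Fin d} (h : (i:ℕ) < (j:ℕ)) : wgt d n j < wgt d n i := by
  unfold wgt
  have h1 : (1:ℤ) < (n:ℤ) + 2 := by omega
  have h2 : d - 1 - (j:ℕ) < d - 1 - (i:ℕ) := by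
    have := j.isLt
    omega
  exact pow_lt_pow_right₀ h1 h2

def enc (d n : ℕ) (p : V d) : ℤ := ∑ i, wgt d n i * p i

lemma sub_add_eI (p : V d) (i : Fin d) : p - eI d i + eI d i = p := by
  funext j
  show p j - (if j = i then 1 else 0) + (if j = i then 1 else 0) = p j
  ring

lemma enc_move (p : V d) (k m : Fin d) :
    enc d n (p - eI d k + eI d m) = enc d n p - wgt d n k + wgt d n m := by
  unfold enc
  have he : ∀ i, (p - eI d k + eI d m) i
      = p i - (if i = k then 1 else 0) + (if i = m then 1 else 0) := fun i => rfl
  simp only [he, mul_sub, mul_add, Finset.sum_add_distrib, Finset.sum_sub_distrib, mul_ite,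
    mul_one, mul_zero, Finset.sum_ite_eq' Finset.univ, Finset.mem_univ, if_true]

lemma contrib {s : ℤ} {p q : V d} (hp : p ∈ L d n s)
    (hcond : Adj d n p q ∧ sum1 q = sum1 p - 1) :
    ∃ m, p = q + eI d m ∧ q = p - eI d m := by
  rcases dist1_eq_one hcond.1.1 with ⟨i, rfl⟩ | ⟨i, rfl⟩
  · exfalso
    have := hcond.2
    rw [sum1_add_eI] at this
    omega
  · exact ⟨i, ((sub_eI_eq_iff p (p - eI d i) i).1 rfl), rfl⟩

lemma indep_rows (hd : 1 ≤ d) {γ : V d → V d → ℝ} (hγ : GoodCond d n γ) (s : ℤ)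
    (y : V d → ℝ) (hy : ∀ p, p ∉ L d n s → y p = 0)
    (h : ∀ qv, ∑ p ∈ box d n, y p * rowv d n γ p qv = 0) : ∀ p, y p = 0 := by
  by_contra hc
  push_neg at hc
  obtain ⟨p1, hp1⟩ := hc
  classical
  set SS := (box d n).filter (fun p => y p ≠ 0) with hSS
  have hp1L : p1 ∈ L d n s := by
    by_contra hcc
    exact hp1 (hy _ hcc)
  have hne : SS.Nonempty := ⟨p1, Finset.mem_filter.2 ⟨dset_sub_box hp1L.1, hp1⟩⟩
  obtain ⟨pm, hpmS, hpmmin⟩ := SS.exists_min_image (fun p => enc d n p) hne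
  have hpmy : y pm ≠ 0 := (Finset.mem_filter.1 hpmS).2
  have hpmL : pm ∈ L d n s := by
    by_contra hcc
    exact hpmy (hy _ hcc)
  set i0 : Fin d := ⟨0, by omega⟩ with hi0
  set q0 := pm - eI d i0 with hq0
  have h0 := h q0
  rw [Finset.sum_eq_single_of_mem pm (Finset.mem_filter.1 hpmS).1 (fun b hb hbne => by
    by_cases hyb : y b = 0
    · rw [hyb, zero_mul]
    · have hbL : b ∈ L d n s := by
        by_contra hcc
        exact hyb (hy _ hcc)
      have hz : rowv d n γ b q0 = 0 := by
        unfold rowv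
        rw [if_neg]
        intro hcond
        obtain ⟨m, hm1, hm2⟩ := contrib hbL hcond
        by_cases hmi : m = i0
        · subst hmi
          rw [hq0, sub_add_eI] at hm1
          exact hbne hm1
        · have henc : enc d n b = enc d n pm - wgt d n i0 + wgt d n m := by
            rw [hm1, hq0]; exact enc_move pm i0 m
          have hlt : wgt d n m < wgt d n i0 := by
            apply wgt_lt
            have : (m : ℕ) ≠ 0 := fun hmm => hmi (Fin.ext hmm)
            simp [hi0]
            omega
          have hble : enc d n pm ≤ enc d n b :=
            hpmmin b (Finset.mem_filter.2 ⟨dset_sub_box hbL.1, hyb⟩)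
          omega
      rw [hz, mul_zero])] at h0
  have hadj : Adj d n pm q0 := adj_interior_dn hpmL.1 i0
  have hrv : rowv d n γ pm q0 = γ q0 pm := by
    unfold rowv
    rw [if_pos ⟨hadj, by rw [hq0, sum1_sub_eI]⟩]
  rw [hrv] at h0
  have hpos := hγ.2 pm q0 hadj
  rw [hγ.1 q0 pm] at h0
  rcases mul_eq_zero.1 h0 with h' | h'
  · exact hpmy h'
  · exact absurd h' (ne_of_gt hpos)

lemma uniqcont (hd : 2 ≤ d) {γ : V d → V d → ℝ} (hγ : GoodCond d n γ)
    (p0 : V d) (hp0 : p0 ∈ L d n (t+1)) (A : V d → ℝ)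
    (hA : ∀ p, p ∉ L d n (t+1) → A p = 0)
    (hsupp : ∀ qv, (∑ p ∈ box d n, A p * rowv d n γ p qv) ≠ 0 →
      Adj d n p0 qv ∧ sum1 qv = t) :
    ∀ p, p ≠ p0 → A p = 0 := by
  by_contra hcon
  push_neg at hcon
  obtain ⟨p1, hp1ne, hp1⟩ := hcon
  classical
  set SS := (box d n).filter (fun p => p ≠ p0 ∧ A p ≠ 0) with hSS
  have memL : ∀ p, A p ≠ 0 → p ∈ L d n (t+1) := by
    intro p hp
    by_contra hcc
    exact hp (hA _ hcc)
  have hne : SS.Nonempty :=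
    ⟨p1, Finset.mem_filter.2 ⟨dset_sub_box (memL _ hp1).1, hp1ne, hp1⟩⟩
  obtain ⟨pmx, hpmxS, hpmxmax⟩ := SS.exists_max_image (fun p => enc d n p) hne
  obtain ⟨pmn, hpmnS, hpmnmin⟩ := SS.exists_min_image (fun p => enc d n p) hne
  obtain ⟨hpmxbox, hpmxne, hpmxA⟩ := Finset.mem_filter.1 hpmxS
  obtain ⟨hpmnbox, hpmnne, hpmnA⟩ := Finset.mem_filter.1 hpmnS
  have hpmxL := memL _ hpmxA
  have hpmnL := memL _ hpmnA
  set i0 : Fin d := ⟨0, by omega⟩ with hi0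
  set iL : Fin d := ⟨d - 1, by omega⟩ with hiL
  by_cases hcmp : enc d n p0 < enc d n pmx
  · -- use the maximum and the last coordinate
    set q0 := pmx - eI d iL with hq0
    have hval : ∑ p ∈ box d n, A p * rowv d n γ p q0 = A pmx * rowv d n γ pmx q0 := by
      apply Finset.sum_eq_single_of_mem pmx hpmxbox
      intro b hb hbne
      by_cases hyb : A b = 0
      · rw [hyb, zero_mul]
      · have hbL := memL _ hyb
        have hz : rowv d n γ b q0 = 0 := by
          unfold rowv
          rw [if_neg]
          intro hcond
          obtain ⟨m, hm1, hm2⟩ := contrib hbL hcond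
          by_cases hmi : m = iL
          · subst hmi
            rw [hq0, sub_add_eI] at hm1
            exact hbne hm1
          · have henc : enc d n b = enc d n pmx - wgt d n iL + wgt d n m := by
              rw [hm1, hq0]; exact enc_move pmx iL m
            have hlt : wgt d n iL < wgt d n m := by
              apply wgt_lt
              have h1 : (m : ℕ) ≠ d - 1 := fun hmm => hmi (Fin.ext (by simp [hiL, hmm]))
              have := m.isLt
              simp [hiL]
              omega
            have hgt : enc d n pmx < enc d n b := by omega
            have hbnep0 : b ≠ p0 := by
              intro hbeq
              rw [hbeq] at hgt
              omega
            have hble : enc d n b ≤ enc d n pmx :=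
              hpmxmax b (Finset.mem_filter.2 ⟨dset_sub_box hbL.1, hbnep0, hyb⟩)
            omega
        rw [hz, mul_zero]
    have hadj : Adj d n pmx q0 := adj_interior_dn hpmxL.1 iL
    have hrv : rowv d n γ pmx q0 = γ q0 pmx := by
      unfold rowv
      rw [if_pos ⟨hadj, by rw [hq0, sum1_sub_eI]⟩]
    have hvne : (∑ p ∈ box d n, A p * rowv d n γ p q0) ≠ 0 := by
      rw [hval, hrv]
      exact mul_ne_zero hpmxA (ne_of_gt (by rw [hγ.1 q0 pmx] at *; exact hγ.2 pmx q0 hadj))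
    obtain ⟨hadj0, hsum0⟩ := hsupp q0 hvne
    have hcond0 : Adj d n p0 q0 ∧ sum1 q0 = sum1 p0 - 1 := ⟨hadj0, by rw [hsum0, hp0.2]; ring⟩
    obtain ⟨m, hm1, hm2⟩ := contrib hp0 hcond0
    by_cases hmi : m = iL
    · subst hmi
      rw [hq0, sub_add_eI] at hm1
      rw [hm1] at hcmp
      omega
    · have henc : enc d n p0 = enc d n pmx - wgt d n iL + wgt d n m := by
        rw [hm1, hq0]; exact enc_move pmx iL m
      have hlt : wgt d n iL < wgt d n m := by
        apply wgt_lt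
        have h1 : (m : ℕ) ≠ d - 1 := fun hmm => hmi (Fin.ext (by simp [hiL, hmm]))
        have := m.isLt
        simp [hiL]
        omega
      omega
  · -- p0 is above everything in SS; use the minimum and the first coordinate
    push_neg at hcmp
    set q0 := pmn - eI d i0 with hq0
    have hval : ∑ p ∈ box d n, A p * rowv d n γ p q0 = A pmn * rowv d n γ pmn q0 := by
      apply Finset.sum_eq_single_of_mem pmn hpmnbox
      intro b hb hbne
      by_cases hyb : A b = 0
      · rw [hyb, zero_mul]
      · have hbL := memL _ hyb
        have hz : rowv d n γ b q0 = 0 := by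
          unfold rowv
          rw [if_neg]
          intro hcond
          obtain ⟨m, hm1, hm2⟩ := contrib hbL hcond
          by_cases hmi : m = i0
          · subst hmi
            rw [hq0, sub_add_eI] at hm1
            exact hbne hm1
          · have henc : enc d n b = enc d n pmn - wgt d n i0 + wgt d n m := by
              rw [hm1, hq0]; exact enc_move pmn i0 m
            have hlt : wgt d n m < wgt d n i0 := by
              apply wgt_lt
              have h1 : (m : ℕ) ≠ 0 := fun hmm => hmi (Fin.ext hmm)
              simp [hi0]
              omega
            have hgt : enc d n b < enc d n pmn := by omega
            have hmxmn : enc d n pmn ≤ enc d n pmx :=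
              le_trans (hpmnmin pmx hpmxS) (le_refl _)
            have hbnep0 : b ≠ p0 := by
              intro hbeq
              rw [hbeq] at hgt
              omega
            have hble : enc d n pmn ≤ enc d n b :=
              hpmnmin b (Finset.mem_filter.2 ⟨dset_sub_box hbL.1, hbnep0, hyb⟩)
            omega
        rw [hz, mul_zero]
    have hadj : Adj d n pmn q0 := adj_interior_dn hpmnL.1 i0
    have hrv : rowv d n γ pmn q0 = γ q0 pmn := by
      unfold rowv
      rw [if_pos ⟨hadj, by rw [hq0, sum1_sub_eI]⟩]
    have hvne : (∑ p ∈ box d n, A p * rowv d n γ p q0) ≠ 0 := by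
      rw [hval, hrv]
      exact mul_ne_zero hpmnA (ne_of_gt (by rw [hγ.1 q0 pmn] at *; exact hγ.2 pmn q0 hadj))
    obtain ⟨hadj0, hsum0⟩ := hsupp q0 hvne
    have hcond0 : Adj d n p0 q0 ∧ sum1 q0 = sum1 p0 - 1 := ⟨hadj0, by rw [hsum0, hp0.2]; ring⟩
    obtain ⟨m, hm1, hm2⟩ := contrib hp0 hcond0
    by_cases hmi : m = i0
    · subst hmi
      rw [hq0, sub_add_eI] at hm1
      exact hpmnne hm1.symm
    · have henc : enc d n p0 = enc d n pmn - wgt d n i0 + wgt d n m := by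
        rw [hm1, hq0]; exact enc_move pmn i0 m
      have hlt : wgt d n m < wgt d n i0 := by
        apply wgt_lt
        have h1 : (m : ℕ) ≠ 0 := fun hmm => hmi (Fin.ext hmm)
        simp [hi0]
        omega
      have hmnle : enc d n pmn ≤ enc d n pmx := hpmnmin pmx hpmxS
      omega

end Indep


section Surj

variable {d n : ℕ}

lemma surj_step (hd : 1 ≤ d) {γ : V d → V d → ℝ} (hγ : GoodCond d n γ) (s : ℤ) (b : V d → ℝ) :
    ∃ h : V d → ℝ, (∀ x, ¬(x ∈ Vset d n ∧ sum1 x = s - 1) → h x = 0) ∧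
      ∀ p, p ∈ L d n s → ∑ q ∈ box d n, rowv d n γ p q * h q = b p := by
  classical
  set cols := (box d n).filter (fun x => x ∈ Vset d n ∧ sum1 x = s - 1) with hcols
  set rows := (box d n).filter (fun x => x ∈ L d n s) with hrows
  have ind : ∀ y : {x // x ∈ rows} → ℝ,
      (∀ i : {x // x ∈ cols}, ∑ k, y k * rowv d n γ k.1 i.1 = 0) → ∀ k, y k = 0 := by
    intro y hy
    set Y : V d → ℝ := fun p => if h : p ∈ rows then y ⟨p, h⟩ else 0 with hY
    have hYsupp : ∀ p, p ∉ L d n s → Y p = 0 := by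
      intro p hp
      rw [hY]
      dsimp only
      rw [dif_neg]
      intro hmem
      exact hp (Finset.mem_filter.1 hmem).2
    have hker : ∀ qv, ∑ p ∈ box d n, Y p * rowv d n γ p qv = 0 := by
      intro qv
      by_cases hq : qv ∈ cols
      · have h2 := hy ⟨qv, hq⟩
        have e1 : ∑ p ∈ box d n, Y p * rowv d n γ p qv = ∑ p ∈ rows, Y p * rowv d n γ p qv :=
          (Finset.sum_subset (Finset.filter_subset _ _) (fun x hx hnx => by
              rw [hY]; dsimp only; rw [dif_neg hnx, zero_mul])).symm
        have e2 : ∑ p ∈ rows, Y p * rowv d n γ p qv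
            = ∑ k : {x // x ∈ rows}, Y k.1 * rowv d n γ k.1 qv :=
          (Finset.sum_coe_sort rows (fun p => Y p * rowv d n γ p qv)).symm
        rw [e1, e2, ← h2]
        apply Finset.sum_congr rfl
        intro k _
        rw [hY]
        dsimp only
        rw [dif_pos k.2]
      · apply Finset.sum_eq_zero
        intro p hp
        by_cases hYp : Y p = 0
        · rw [hYp, zero_mul]
        · have hpL : p ∈ L d n s := by
            by_contra hcc
            exact hYp (hYsupp _ hcc)
          have hz : rowv d n γ p qv = 0 := by
            unfold rowv
            rw [if_neg]
            rintro ⟨hadj, hsum⟩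
            exact hq (Finset.mem_filter.2 ⟨vset_sub_box hadj.2.2.1, hadj.2.2.1,
              by rw [hsum, hpL.2]⟩)
          rw [hz, mul_zero]
    intro k
    have := indep_rows hd hγ s Y hYsupp hker k.1
    rw [hY] at this
    dsimp only at this
    rwa [dif_pos k.2] at this
  obtain ⟨x, hx⟩ := dual_surj (fun (k : {x // x ∈ rows}) (i : {x // x ∈ cols}) =>
    rowv d n γ k.1 i.1) ind (fun k => b k.1)
  set hfun : V d → ℝ := fun q => if hq : q ∈ cols then x ⟨q, hq⟩ else 0 with hhfun
  have hfun_in : ∀ q (hq : q ∈ cols), hfun q = x ⟨q, hq⟩ := by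
    intro q hq
    rw [hhfun]; dsimp only; rw [dif_pos hq]
  have hfun_out : ∀ q, q ∉ cols → hfun q = 0 := by
    intro q hq
    rw [hhfun]; dsimp only; rw [dif_neg hq]
  refine ⟨hfun, ?_, ?_⟩
  · intro q hq
    apply hfun_out
    intro hmem
    exact hq (Finset.mem_filter.1 hmem).2
  · intro p hp
    have hprows : p ∈ rows := Finset.mem_filter.2 ⟨dset_sub_box hp.1, hp⟩
    have h3 := hx ⟨p, hprows⟩
    have e1 : ∑ q ∈ box d n, rowv d n γ p q * hfun q = ∑ q ∈ cols, rowv d n γ p q * hfun q :=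
      (Finset.sum_subset (Finset.filter_subset _ _) (fun q hq hnq => by
        rw [hfun_out q hnq, mul_zero])).symm
    have e2 : ∑ q ∈ cols, rowv d n γ p q * hfun q
        = ∑ i : {x // x ∈ cols}, rowv d n γ p i.1 * hfun i.1 :=
      (Finset.sum_coe_sort cols (fun q => rowv d n γ p q * hfun q)).symm
    rw [e1, e2, ← h3]
    apply Finset.sum_congr rfl
    intro i _
    rw [hfun_in i.1 i.2]

lemma dset_sum_lb {p : V d} (hp : p ∈ Dset d n) : (d:ℤ) ≤ sum1 p := by
  unfold sum1
  calc (d:ℤ) = ∑ _i : Fin d, (1:ℤ) := by simp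
  _ ≤ ∑ i, p i := Finset.sum_le_sum fun i _ => (hp i).1

lemma interior_up_not_kp {p : V d} (hp : p ∈ Dset d n) (i : Fin d) {s : ℤ} :
    p - eI d i ∉ Kp d n s := by
  rintro ⟨-, j, hj⟩
  have h1 := (hp j).2
  rw [sub_eI_apply] at hj
  split at hj <;> omega

lemma lap_low {γ : V d → V d → ℝ} {s : ℤ} {p : V d} (hp : p ∈ L d n s) {F : V d → ℝ}
    (hF : ∀ x, ¬(x ∈ Vset d n ∧ sum1 x = s - 1) → F x = 0) :
    lap d n γ F p = ∑ q ∈ box d n, rowv d n γ p q * F q := by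
  rw [lap_eq hp.1, rowv_sum hp.1]
  have hFp : F p = 0 := hF p (fun hc => by have := hc.2; rw [hp.2] at this; omega)
  have hFup : ∀ i, F (p + eI d i) = 0 := fun i => hF _ (fun hc => by
    have := hc.2; rw [sum1_add_eI, hp.2] at this; omega)
  rw [Finset.sum_eq_zero (fun i _ => by rw [hFup i, hFp]; ring), zero_add]
  apply Finset.sum_congr rfl
  intro i _
  rw [hFp]
  ring

lemma achieve (hd : 2 ≤ d) {γ : V d → V d → ℝ} (hγ : GoodCond d n γ) (t : ℤ)
    (xt ψ : V d → ℝ)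
    (hxt : ∀ x, ¬(x ∈ Vset d n ∧ sum1 x = t) → xt x = 0)
    (hψ : ∀ x, x ∉ Kp d n (t+1) → ψ x = 0)
    (hker : ∀ p, p ∈ L d n (t+1) → ∑ q ∈ box d n, rowv d n γ p q * xt q = 0) :
    ∃ u ∈ Uset d n γ t,
      (∀ q, q ∈ Vset d n → sum1 q = t → u q = xt q) ∧
      (∀ q, q ∈ Kp d n (t+1) → u q = ψ q) ∧
      (∀ q, q ∈ L d n (t+1) → u q = 0) := by
  classical
  have hd1 : 1 ≤ d := by omega
  set W0 : V d → ℝ := fun x => if sum1 x = t then xt x else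
    if x ∈ Kp d n (t+1) then ψ x else 0 with hW0def
  have hW0a : ∀ x, sum1 x = t → W0 x = xt x := fun x hx => by
    rw [hW0def]; dsimp only; rw [if_pos hx]
  have hW0c : ∀ x, x ∈ Kp d n (t+1) → W0 x = ψ x := fun x hx => by
    rw [hW0def]; dsimp only
    rw [if_neg (by have := hx.1.2; omega), if_pos hx]
  have hW0b : ∀ x, sum1 x ≠ t → x ∉ Kp d n (t+1) → W0 x = 0 := fun x h1 h2 => by
    rw [hW0def]; dsimp only; rw [if_neg h1, if_neg h2]
  have hW0v : ∀ x, x ∉ Vset d n → W0 x = 0 := by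
    intro x hx
    by_cases h1 : sum1 x = t
    · rw [hW0a x h1]
      exact hxt x (fun hc => hx hc.1)
    · refine hW0b x h1 (fun hc => hx (Or.inr hc.1.1))
  obtain ⟨FH, hFH1, hFH2⟩ : ∃ FH : ℤ → (V d → ℝ) → (V d → ℝ),
      (∀ s W, ∀ x, ¬(x ∈ Vset d n ∧ sum1 x = s - 1) → FH s W x = 0) ∧
      (∀ s W, ∀ p, p ∈ L d n s →
        ∑ q ∈ box d n, rowv d n γ p q * FH s W q = - lap d n γ W p) := by
    have h := fun (s : ℤ) (W : V d → ℝ) => surj_step hd1 hγ s (fun p => - lap d n γ W p)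
    choose FH h1 h2 using h
    exact ⟨FH, h1, h2⟩
  set Wseq : ℕ → V d → ℝ :=
    fun k => Nat.rec W0 (fun k Wk => fun x => Wk x + FH (t - k) Wk x) k with hWseq
  have hWsucc : ∀ k, Wseq (k+1) = fun x => Wseq k x + FH (t - k) (Wseq k) x := fun k => rfl
  have hP : ∀ k, (∀ x, x ∉ Vset d n → Wseq k x = 0) ∧
      (∀ x, t ≤ sum1 x → Wseq k x = W0 x) ∧
      (∀ p, p ∈ Dset d n → t - k < sum1 p → sum1 p ≤ t → lap d n γ (Wseq k) p = 0) := by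
    intro k
    induction k with
    | zero =>
      refine ⟨hW0v, fun x _ => rfl, fun p hp h1 h2 => absurd (lt_of_lt_of_le h1 h2) (by omega)⟩
    | succ k ih =>
      obtain ⟨ih1, ih2, ih3⟩ := ih
      have hF1 := hFH1 (t - k) (Wseq k)
      have hF2 := hFH2 (t - k) (Wseq k)
      refine ⟨?_, ?_, ?_⟩
      · intro x hx
        rw [hWsucc k]
        dsimp only
        rw [ih1 x hx, hF1 x (fun hc => hx hc.1), add_zero]
      · intro x hx
        rw [hWsucc k]
        dsimp only
        rw [ih2 x hx, hF1 x (fun hc => by have := hc.2; omega), add_zero]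
      · intro p hp h1 h2
        rw [hWsucc k, lap_add]
        by_cases hcase : t - k < sum1 p
        · rw [ih3 p hp hcase h2]
          have hFzero : ∀ x, sum1 x ≠ t - k - 1 → FH (t - k) (Wseq k) x = 0 := by
            intro x hxx
            exact hF1 x (fun hc => hxx (by have := hc.2; omega))
          rw [show lap d n γ (FH (t - k) (Wseq k)) p = 0 from ?_, add_zero]
          rw [lap_eq hp]
          have e1 : FH (t - k) (Wseq k) p = 0 := hFzero p (by omega)
          have e2 : ∀ i, FH (t - k) (Wseq k) (p + eI d i) = 0 :=
            fun i => hFzero _ (by rw [sum1_add_eI]; omega)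
          have e3 : ∀ i, FH (t - k) (Wseq k) (p - eI d i) = 0 :=
            fun i => hFzero _ (by rw [sum1_sub_eI]; omega)
          rw [Finset.sum_eq_zero (fun i _ => by rw [e1, e2 i]; ring),
            Finset.sum_eq_zero (fun i _ => by rw [e1, e3 i]; ring), add_zero]
        · have hpeq : sum1 p = t - k := by omega
          have hpL : p ∈ L d n (t - k) := ⟨hp, hpeq⟩
          rw [lap_low hpL (hF1), hF2 p hpL]
          ring
  set N : ℕ := t.toNat + 1 with hN
  set W : V d → ℝ := Wseq N with hW
  obtain ⟨hP1, hP2, hP3⟩ := hP N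
  rw [← hW] at hP1 hP2 hP3
  have hlapW : ∀ p, p ∈ Dset d n → lap d n γ W p = 0 := by
    intro p hp
    have hlb : (d:ℤ) ≤ sum1 p := dset_sum_lb hp
    by_cases h1 : sum1 p ≤ t
    · exact hP3 p hp (by omega) h1
    · -- sum1 p ≥ t + 1 : compute directly
      have hWp : W p = W0 p := hP2 p (by omega)
      have hW0p : W0 p = 0 := hW0b p (by omega) (fun hc => hc.1.1.1 hp)
      have hup : ∀ i, W (p + eI d i) = W0 (p + eI d i) :=
        fun i => hP2 _ (by rw [sum1_add_eI]; omega)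
      have hupz : ∀ i, W0 (p + eI d i) = 0 := by
        intro i
        apply hW0b
        · rw [sum1_add_eI]; omega
        · intro hc
          have := hc.1.2
          rw [sum1_add_eI] at this
          omega
      have hdn : ∀ i, W (p - eI d i) = W0 (p - eI d i) :=
        fun i => hP2 _ (by rw [sum1_sub_eI]; omega)
      by_cases h2 : sum1 p = t + 1
      · -- harmonic by the kernel property
        rw [lap_eq hp]
        have hdnv : ∀ i, W (p - eI d i) = xt (p - eI d i) := by
          intro i
          rw [hdn i]
          apply hW0a
          rw [sum1_sub_eI]
          omega
        rw [Finset.sum_eq_zero (fun i _ => by rw [hWp, hW0p, hup i, hupz i]; ring)]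
        have hk := hker p ⟨hp, h2⟩
        rw [rowv_sum hp xt] at hk
        rw [zero_add, ← hk]
        apply Finset.sum_congr rfl
        intro i _
        rw [hdnv i, hWp, hW0p]
        ring
      · -- sum1 p ≥ t + 2 : everything vanishes
        have hdnz : ∀ i, W0 (p - eI d i) = 0 := by
          intro i
          apply hW0b
          · rw [sum1_sub_eI]; omega
          · exact interior_up_not_kp hp i
        rw [lap_eq hp]
        rw [Finset.sum_eq_zero (fun i _ => by rw [hWp, hW0p, hup i, hupz i]; ring),
          Finset.sum_eq_zero (fun i _ => by rw [hWp, hW0p, hdn i, hdnz i]; ring), add_zero]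
  have hWt1 : ∀ p, p ∈ L d n (t+1) → W p = 0 := by
    intro p hp
    rw [hP2 p (by rw [hp.2]; omega)]
    exact hW0b p (by rw [hp.2]; omega) (fun hc => hc.1.1.1 hp.1)
  have hBJS : ∀ x, x ∈ Bset d n → sum1 x ≤ t + 1 → x ∈ JS d n t ∨
      (x ∈ Km d n (t+1) ∧ sum1 x = t + 1) := by
    intro x hx hsum
    obtain ⟨i, hcase, hrest⟩ := bset_spec hx
    rcases hcase with ⟨h0, -⟩ | ⟨h0, -⟩
    · by_cases hle : sum1 x ≤ t
      · exact Or.inl (Or.inl ⟨hx, hle, i, h0⟩)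
      · exact Or.inr ⟨⟨⟨hx, by omega⟩, i, h0⟩, by omega⟩
    · exact Or.inl (Or.inr ⟨hx, hsum, i, h0⟩)
  have hφJS : ∀ x, x ∈ Bset d n → x ∉ JS d n t → W x = 0 := by
    intro x hx hnJS
    by_cases hsum : sum1 x ≤ t + 1
    · rcases hBJS x hx hsum with h | ⟨hKm, hs⟩
      · exact absurd h hnJS
      · -- x ∈ Km (t+1) : not Kp(t+1), sum ≠ t
        rw [hP2 x (by omega)]
        apply hW0b x (by omega)
        intro hc
        -- x has both a 0 and an n+1 coordinate: impossible
        obtain ⟨i, h0, -, hrest⟩ := km_struct hKm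
        obtain ⟨-, j, hj⟩ := hc
        by_cases hij : j = i
        · subst hij; omega
        · have := hrest j hij; omega
    · rw [hP2 x (by omega)]
      exact hW0b x (by omega) (fun hc => by have := hc.1.2; omega)
  refine ⟨rst (LS d n t ∪ JS d n t) W, ?_, ?_, ?_, ?_⟩
  · refine ⟨fun p hp => by unfold rst; rw [if_neg hp], ?_⟩
    refine ⟨rst (Bset d n) W, W, ?_, ⟨hP1, hlapW, ?_⟩, hWt1, ?_⟩
    · intro p hp
      unfold rst
      split
      · exact hφJS p ‹_› hp
      · rfl
    · intro p hp
      unfold rst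
      rw [if_pos hp]
    · intro p hp
      unfold rst
      rw [if_pos hp]
  · intro q hq hsum
    have hmem : q ∈ LS d n t ∪ JS d n t := by
      rcases hq with hD | hB
      · exact Or.inl ⟨hD, le_of_eq hsum⟩
      · rcases hBJS q hB (by omega) with h | ⟨-, hs⟩
        · exact Or.inr h
        · omega
    unfold rst
    rw [if_pos hmem, hP2 q (le_of_eq hsum.symm), hW0a q hsum]
  · intro q hq
    have hmem : q ∈ LS d n t ∪ JS d n t :=
      Or.inr (Or.inr ⟨hq.1.1, le_of_eq hq.1.2, hq.2⟩)
    unfold rst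
    rw [if_pos hmem, hP2 q (by rw [hq.1.2]; omega), hW0c q hq]
  · intro q hq
    have hmem : q ∉ LS d n t ∪ JS d n t := by
      rintro (h | h)
      · have := h.2; rw [hq.2] at this; omega
      · rcases h with h | h
        · exact h.1.1 hq.1
        · exact h.1.1 hq.1
    unfold rst
    rw [if_neg hmem]

end Surj


section SpanStep

variable {d n : ℕ} {t : ℤ}

lemma add_sub_eI (p : V d) (i : Fin d) : p + eI d i - eI d i = p := by
  funext j
  show p j + (if j = i then 1 else 0) - (if j = i then 1 else 0) = p j
  ring

lemma sum_edge_Lt {p : V d} (hp : p ∈ L d n t) (F : V d → ℝ) :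
    ∑ q ∈ box d n, (if EdgeT d n t p q then F q else 0) = ∑ i, F (p + eI d i) := by
  rw [← Finset.sum_filter]
  have hset : (box d n).filter (fun q => EdgeT d n t p q)
      = Finset.univ.image (fun i => p + eI d i) := by
    ext q
    rw [Finset.mem_filter, Finset.mem_image]
    constructor
    · rintro ⟨hbox, he⟩
      obtain ⟨i, rfl⟩ := (edgeT_Lt_char hp).1 he
      exact ⟨i, Finset.mem_univ i, rfl⟩
    · rintro ⟨i, -, rfl⟩
      have he : EdgeT d n t p (p + eI d i) := (edgeT_Lt_char hp).2 ⟨i, rfl⟩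
      exact ⟨edgeT_box he, he⟩
  rw [hset, Finset.sum_image (fun i _ j _ h => eI_add_inj h)]

lemma span_step (hd : 2 ≤ d) {γ : V d → V d → ℝ} (hγ : GoodCond d n γ)
    {p0 : V d} (hp0 : p0 ∈ L d n (t+1)) (z : V d → ℝ)
    (hz1 : ∀ q, z q ≠ 0 → Adj d n p0 q ∧ sum1 q = t)
    (hz2 : ∀ xt : V d → ℝ, (∀ x, ¬(x ∈ Vset d n ∧ sum1 x = t) → xt x = 0) →
      (∀ p, p ∈ L d n (t+1) → ∑ q ∈ box d n, rowv d n γ p q * xt q = 0) →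
      ∑ q ∈ box d n, xt q * z q = 0) :
    ∃ a : ℝ, ∀ q, z q = a * rowv d n γ p0 q := by
  classical
  set cols := (box d n).filter (fun x => x ∈ Vset d n ∧ sum1 x = t) with hcols
  set rows := (box d n).filter (fun x => x ∈ L d n (t+1)) with hrows
  have hzcols : ∀ q, q ∉ cols → z q = 0 := by
    intro q hq
    by_contra hc
    obtain ⟨hadj, hsum⟩ := hz1 q hc
    exact hq (Finset.mem_filter.2 ⟨vset_sub_box hadj.2.2.1, hadj.2.2.1, hsum⟩)
  have hrowv_cols : ∀ (p : V d), p ∈ L d n (t+1) → ∀ q, q ∉ cols → rowv d n γ p q = 0 := by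
    intro p hpL q hq
    unfold rowv
    rw [if_neg]
    rintro ⟨hadj, hsum⟩
    refine hq (Finset.mem_filter.2 ⟨vset_sub_box hadj.2.2.1, hadj.2.2.1, ?_⟩)
    rw [hsum, hpL.2]
    ring
  have key := dual_span (ι := {x // x ∈ cols}) (κ := {x // x ∈ rows})
    (fun k i => rowv d n γ k.1 i.1) (fun i => z i.1) ?_
  · obtain ⟨α, hα⟩ := key
    set A : V d → ℝ := fun p => if h : p ∈ rows then α ⟨p, h⟩ else 0 with hA
    have hAin : ∀ p (h : p ∈ rows), A p = α ⟨p, h⟩ := by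
      intro p h
      rw [hA]; dsimp only; rw [dif_pos h]
    have hAout : ∀ p, p ∉ rows → A p = 0 := by
      intro p h
      rw [hA]; dsimp only; rw [dif_neg h]
    have hAsupp : ∀ p, p ∉ L d n (t+1) → A p = 0 := by
      intro p hp
      apply hAout
      intro hmem
      exact hp (Finset.mem_filter.1 hmem).2
    have hveq : ∀ q, ∑ p ∈ box d n, A p * rowv d n γ p q = z q := by
      intro q
      by_cases hq : q ∈ cols
      · have e1 : ∑ p ∈ box d n, A p * rowv d n γ p q = ∑ p ∈ rows, A p * rowv d n γ p q :=
          (Finset.sum_subset (Finset.filter_subset _ _)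
            (fun x hx hnx => by rw [hAout x hnx, zero_mul])).symm
        have e2 : ∑ p ∈ rows, A p * rowv d n γ p q
            = ∑ k : {x // x ∈ rows}, A k.1 * rowv d n γ k.1 q :=
          (Finset.sum_coe_sort rows (fun p => A p * rowv d n γ p q)).symm
        rw [e1, e2]
        have e3 := hα ⟨q, hq⟩
        dsimp only at e3
        rw [e3]
        apply Finset.sum_congr rfl
        intro k _
        rw [hAin k.1 k.2]
      · rw [hzcols q hq]
        apply Finset.sum_eq_zero
        intro p hp
        by_cases hpA : A p = 0
        · rw [hpA, zero_mul]
        · have hpL : p ∈ L d n (t+1) := by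
            by_contra hcc
            exact hpA (hAsupp _ hcc)
          rw [hrowv_cols p hpL q hq, mul_zero]
    have huc := uniqcont hd hγ p0 hp0 A hAsupp (fun qv hne => by
      rw [hveq qv] at hne
      exact hz1 qv hne)
    have hp0rows : p0 ∈ rows := Finset.mem_filter.2 ⟨dset_sub_box hp0.1, hp0⟩
    refine ⟨A p0, fun q => ?_⟩
    rw [← hveq q]
    rw [Finset.sum_eq_single_of_mem p0 (dset_sub_box hp0.1)
      (fun b hb hbne => by rw [huc b hbne, zero_mul])]
  · intro x hx
    set xt : V d → ℝ := fun q => if h : q ∈ cols then x ⟨q, h⟩ else 0 with hxt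
    have hxtin : ∀ q (h : q ∈ cols), xt q = x ⟨q, h⟩ := by
      intro q h
      rw [hxt]; dsimp only; rw [dif_pos h]
    have hxtout : ∀ q, q ∉ cols → xt q = 0 := by
      intro q h
      rw [hxt]; dsimp only; rw [dif_neg h]
    have h1 : ∀ xx, ¬(xx ∈ Vset d n ∧ sum1 xx = t) → xt xx = 0 := by
      intro xx hxx
      apply hxtout
      intro hmem
      exact hxx (Finset.mem_filter.1 hmem).2
    have h2 : ∀ p, p ∈ L d n (t+1) → ∑ q ∈ box d n, rowv d n γ p q * xt q = 0 := by
      intro p hpL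
      have hprows : p ∈ rows := Finset.mem_filter.2 ⟨dset_sub_box hpL.1, hpL⟩
      have e1 : ∑ q ∈ box d n, rowv d n γ p q * xt q = ∑ q ∈ cols, rowv d n γ p q * xt q :=
        (Finset.sum_subset (Finset.filter_subset _ _)
          (fun q hq hnq => by rw [hxtout q hnq, mul_zero])).symm
      have e2 : ∑ q ∈ cols, rowv d n γ p q * xt q
          = ∑ i : {x // x ∈ cols}, rowv d n γ p i.1 * xt i.1 :=
        (Finset.sum_coe_sort cols (fun q => rowv d n γ p q * xt q)).symm
      rw [e1, e2]
      have e3 := hx ⟨p, hprows⟩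
      rw [← e3]
      apply Finset.sum_congr rfl
      intro i _
      rw [hxtin i.1 i.2]
    have h3 := hz2 xt h1 h2
    have e1 : ∑ q ∈ box d n, xt q * z q = ∑ q ∈ cols, xt q * z q :=
      (Finset.sum_subset (Finset.filter_subset _ _)
        (fun q hq hnq => by rw [hxtout q hnq, zero_mul])).symm
    have e2 : ∑ q ∈ cols, xt q * z q = ∑ i : {x // x ∈ cols}, xt i.1 * z i.1 :=
      (Finset.sum_coe_sort cols (fun q => xt q * z q)).symm
    rw [e1, e2] at h3
    rw [← h3]
    apply Finset.sum_congr rfl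
    intro i _
    rw [hxtin i.1 i.2]
    ring

end SpanStep

/-- the orthogonal complement of
`span{ J_p^u : u ∈ 𝒰^{(t)}, p ∈ L_t ∪ L_{t+1} ∪ J_t }` in `ℝ^{E_t}` is trivial. -/
theorem stmt14 (d n : ℕ) (hd : 2 ≤ d) (hn : 1 ≤ n)
    (γ : V d → V d → ℝ) (hγ : GoodCond d n γ)
    (t : ℤ) (ht1 : (d : ℤ) - 1 ≤ t) (ht2 : t ≤ (d : ℤ) * n - 1)
    (w : V d → V d → ℝ)
    (hsym : ∀ a b, w a b = w b a)
    (hsupp : ∀ a b, ¬ EdgeT d n t a b → w a b = 0)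
    (horth : ∀ u ∈ Uset d n γ t, ∀ p ∈ L d n t ∪ L d n (t + 1) ∪ Jslice d n t,
      dotE d n (Jvec d n t u p) w = 0) :
    ∀ a b, w a b = 0 := by
  classical
  have hd1 : 1 ≤ d := by omega
  -- Step 1: edges between `L_t` and `K_{t+1}^+` carry weight zero.
  have hb : ∀ p, p ∈ Kp d n (t+1) → ∀ q, EdgeT d n t p q → w p q = 0 := by
    intro p hp q he
    obtain ⟨i, h0, hD, -⟩ := kp_struct hp
    have hchar : ∀ q', EdgeT d n t p q' ↔ q' = p - eI d i :=
      fun q' => edgeT_Kp_char hp h0 hD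
    obtain rfl : q = p - eI d i := (hchar q).1 he
    obtain ⟨u, hu, V1, V2, V3⟩ := achieve hd hγ t (fun _ => 0)
      (fun x => if x = p then 1 else 0)
      (fun x _ => rfl)
      (fun x hx => if_neg (fun hc => hx (by rw [hc]; exact hp)))
      (fun p' _ => by simp)
    have h3 := horth u hu p (Or.inr (Or.inr hp))
    rw [dotE_eq hsym (bset_sub_box hp.1.1)] at h3
    have hsum1q : sum1 (p - eI d i) = t := by rw [sum1_sub_eI, hp.1.2]; ring
    have hval : ∑ q' ∈ box d n, (if EdgeT d n t p q' then (u p - u q') * w p q' else 0)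
        = w p (p - eI d i) := by
      rw [Finset.sum_eq_single_of_mem (p - eI d i) (dset_sub_box hD)
        (fun b hbx hbne => by rw [if_neg (fun hc => hbne ((hchar b).1 hc))])]
      rw [if_pos ((hchar _).2 rfl)]
      rw [V2 p hp, V1 (p - eI d i) (Or.inl hD) hsum1q]
      simp
    rw [hval] at h3
    linarith
  -- relation for rows of `L_{t+1}`
  have hrelL1 : ∀ p, p ∈ L d n (t+1) →
      ∀ xt : V d → ℝ, (∀ x, ¬(x ∈ Vset d n ∧ sum1 x = t) → xt x = 0) →
      (∀ p', p' ∈ L d n (t+1) → ∑ q ∈ box d n, rowv d n γ p' q * xt q = 0) →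
      ∑ q ∈ box d n, xt q * w p q = 0 := by
    intro p hpL xt h1 h2
    obtain ⟨u, hu, V1, V2, V3⟩ := achieve hd hγ t xt (fun _ => 0) h1 (fun x _ => rfl) h2
    have h3 := horth u hu p (Or.inl (Or.inr hpL))
    rw [dotE_eq hsym (dset_sub_box hpL.1)] at h3
    have e : ∀ q ∈ box d n,
        (if EdgeT d n t p q then (u p - u q) * w p q else 0) = -(xt q * w p q) := by
      intro q hq
      by_cases he : EdgeT d n t p q
      · rw [if_pos he]
        obtain ⟨i, rfl⟩ := (edgeT_Lt1_char hpL).1 he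
        have hqv : p - eI d i ∈ Vset d n := he.1.2.2.1
        have hqs : sum1 (p - eI d i) = t := by rw [sum1_sub_eI, hpL.2]; ring
        rw [V1 _ hqv hqs, V3 p hpL]
        ring
      · rw [if_neg he, hsupp p q he]
        ring
    rw [Finset.sum_congr rfl e, Finset.sum_neg_distrib] at h3
    linarith
  -- relation for boundary points of `K_t^-`
  have hrelKm : ∀ p, p ∈ Km d n t → ∀ (i : Fin d), p i = 0 → p + eI d i ∈ Dset d n →
      ∀ xt : V d → ℝ, (∀ x, ¬(x ∈ Vset d n ∧ sum1 x = t) → xt x = 0) →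
      (∀ p', p' ∈ L d n (t+1) → ∑ q ∈ box d n, rowv d n γ p' q * xt q = 0) →
      xt p * w p (p + eI d i) = 0 := by
    intro p hp i h0 hD xt h1 h2
    obtain ⟨u, hu, V1, V2, V3⟩ := achieve hd hγ t xt (fun _ => 0) h1 (fun x _ => rfl) h2
    have h3 := horth u hu p (Or.inr (Or.inl hp))
    rw [dotE_eq hsym (bset_sub_box hp.1.1)] at h3
    have hchar : ∀ q', EdgeT d n t p q' ↔ q' = p + eI d i :=
      fun q' => edgeT_Km_char hp h0 hD
    have hpsL : p + eI d i ∈ L d n (t+1) := ⟨hD, by rw [sum1_add_eI, hp.1.2]⟩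
    have hval : ∑ q' ∈ box d n, (if EdgeT d n t p q' then (u p - u q') * w p q' else 0)
        = xt p * w p (p + eI d i) := by
      rw [Finset.sum_eq_single_of_mem (p + eI d i) (dset_sub_box hD)
        (fun b hbx hbne => by rw [if_neg (fun hc => hbne ((hchar b).1 hc))])]
      rw [if_pos ((hchar _).2 rfl)]
      rw [V1 p (Or.inr hp.1.1) hp.1.2, V3 _ hpsL]
      ring
    rw [hval] at h3
    linarith
  -- relation for points of `L_t`
  have hrelLt : ∀ p, p ∈ L d n t →
      ∀ xt : V d → ℝ, (∀ x, ¬(x ∈ Vset d n ∧ sum1 x = t) → xt x = 0) →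
      (∀ p', p' ∈ L d n (t+1) → ∑ q ∈ box d n, rowv d n γ p' q * xt q = 0) →
      xt p * (∑ i, w p (p + eI d i)) = 0 := by
    intro p hp xt h1 h2
    obtain ⟨u, hu, V1, V2, V3⟩ := achieve hd hγ t xt (fun _ => 0) h1 (fun x _ => rfl) h2
    have h3 := horth u hu p (Or.inl (Or.inl hp))
    rw [dotE_eq hsym (dset_sub_box hp.1)] at h3
    rw [sum_edge_Lt hp (fun q => (u p - u q) * w p q)] at h3
    have e : ∀ i : Fin d, (u p - u (p + eI d i)) * w p (p + eI d i)
        = xt p * w p (p + eI d i) := by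
      intro i
      have hup : u (p + eI d i) = 0 := by
        rcases L_up_mem hp i with hL | hKp
        · exact V3 _ hL
        · exact V2 _ hKp
      rw [hup, V1 p (Or.inl hp.1) hp.2]
      ring
    rw [Finset.sum_congr rfl (fun i _ => e i), ← Finset.mul_sum] at h3
    linarith
  have hnt : Nontrivial (Fin d) := by
    have : 2 ≤ d := hd
    exact Fin.nontrivial_iff_two_le.2 this
  -- Step 2 : edges between `K_t^-` and `L_{t+1}` carry weight zero.
  have hKmzero : ∀ p, p ∈ Km d n t → ∀ q, EdgeT d n t p q → w p q = 0 := by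
    intro p hp q he
    obtain ⟨i, h0, hD, -⟩ := km_struct hp
    have hchar : ∀ q', EdgeT d n t p q' ↔ q' = p + eI d i :=
      fun q' => edgeT_Km_char hp h0 hD
    obtain rfl : q = p + eI d i := (hchar q).1 he
    have hpsL : p + eI d i ∈ L d n (t+1) := ⟨hD, by rw [sum1_add_eI, hp.1.2]⟩
    have hadjp : Adj d n (p + eI d i) p := by
      have h5 := adj_interior_dn (n := n) hD i
      rwa [add_sub_eI] at h5
    obtain ⟨a, ha⟩ := span_step hd hγ hpsL (fun q => if q = p then w p (p + eI d i) else 0)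
      (fun q hq => by
        by_cases hqp : q = p
        · subst hqp
          exact ⟨hadjp, hp.1.2⟩
        · exact absurd (if_neg hqp) hq)
      (fun xt h1 h2 => by
        rw [Finset.sum_eq_single_of_mem p (bset_sub_box hp.1.1)
          (fun b hbx hbne => mul_eq_zero_of_right _ (if_neg hbne))]
        show xt p * (if p = p then w p (p + eI d i) else 0) = 0
        rw [if_pos rfl]
        exact hrelKm p hp i h0 hD xt h1 h2)
    obtain ⟨i', hii'⟩ := exists_ne i
    have hane : a = 0 := by
      have h6 := ha (p + eI d i - eI d i')
      have hne : p + eI d i - eI d i' ≠ p := by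
        intro hc
        apply hii'
        apply eI_sub_inj (p := p + eI d i)
        rw [hc, add_sub_eI]
      rw [if_neg hne] at h6
      have hadj' : Adj d n (p + eI d i) (p + eI d i - eI d i') := adj_interior_dn hD i'
      have hrv : rowv d n γ (p + eI d i) (p + eI d i - eI d i') =
          γ (p + eI d i - eI d i') (p + eI d i) := by
        unfold rowv
        rw [if_pos ⟨hadj', by rw [sum1_sub_eI]⟩]
      rw [hrv] at h6
      rcases mul_eq_zero.1 h6.symm with h' | h'
      · exact h'
      · exact absurd h' (ne_of_gt (hγ.2 _ _ (adj_symm hadj')))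
    have h7 := ha p
    rw [if_pos rfl, hane, zero_mul] at h7
    exact h7
  -- Step 3 : the `H`-sums vanish on `L_t`.
  have hHzero : ∀ p, p ∈ L d n t → (∑ i, w p (p + eI d i)) = 0 := by
    intro p hp
    by_cases hup : ∃ j, p + eI d j ∈ L d n (t+1)
    · obtain ⟨j, hjL⟩ := hup
      have hadjp : Adj d n (p + eI d j) p := by
        have h5 := adj_interior_dn (n := n) hjL.1 j
        rwa [add_sub_eI] at h5
      obtain ⟨a, ha⟩ := span_step hd hγ hjL
        (fun q => if q = p then (∑ i, w p (p + eI d i)) else 0)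
        (fun q hq => by
          by_cases hqp : q = p
          · subst hqp
            exact ⟨hadjp, hp.2⟩
          · exact absurd (if_neg hqp) hq)
        (fun xt h1 h2 => by
          rw [Finset.sum_eq_single_of_mem p (dset_sub_box hp.1)
            (fun b hbx hbne => mul_eq_zero_of_right _ (if_neg hbne))]
          show xt p * (if p = p then (∑ i, w p (p + eI d i)) else 0) = 0
          rw [if_pos rfl]
          exact hrelLt p hp xt h1 h2)
      obtain ⟨i', hii'⟩ := exists_ne j
      have hane : a = 0 := by
        have h6 := ha (p + eI d j - eI d i')
        have hne : p + eI d j - eI d i' ≠ p := by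
          intro hc
          apply hii'
          apply eI_sub_inj (p := p + eI d j)
          rw [hc, add_sub_eI]
        rw [if_neg hne] at h6
        have hadj' : Adj d n (p + eI d j) (p + eI d j - eI d i') := adj_interior_dn hjL.1 i'
        have hrv : rowv d n γ (p + eI d j) (p + eI d j - eI d i') =
            γ (p + eI d j - eI d i') (p + eI d j) := by
          unfold rowv
          rw [if_pos ⟨hadj', by rw [sum1_sub_eI]⟩]
        rw [hrv] at h6
        rcases mul_eq_zero.1 h6.symm with h' | h'
        · exact h'
        · exact absurd h' (ne_of_gt (hγ.2 _ _ (adj_symm hadj')))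
      have h7 := ha p
      rw [if_pos rfl, hane, zero_mul] at h7
      exact h7
    · push_neg at hup
      apply Finset.sum_eq_zero
      intro i _
      rcases L_up_mem hp i with hL | hKp
      · exact absurd hL (hup i)
      · rw [hsym]
        exact hb _ hKp p (edgeT_symm ((edgeT_Lt_char hp).2 ⟨i, rfl⟩))
  -- Step 4 : each row of `L_{t+1}` is proportional to the matrix row.
  have hLrow : ∀ p0, p0 ∈ L d n (t+1) → ∃ a : ℝ, ∀ q, w p0 q = a * rowv d n γ p0 q := by
    intro p0 hp0
    apply span_step hd hγ hp0 (fun q => w p0 q)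
    · intro q hq
      have he : EdgeT d n t p0 q := by
        by_contra hc
        exact hq (hsupp p0 q hc)
      obtain ⟨i, rfl⟩ := (edgeT_Lt1_char hp0).1 he
      exact ⟨adj_interior_dn hp0.1 i, by rw [sum1_sub_eI, hp0.2]; ring⟩
    · exact hrelL1 p0 hp0
  choose! af haf using hLrow
  set A' : V d → ℝ := fun p => if p ∈ L d n (t+1) then af p else 0 with hA'
  have hA'supp : ∀ p, p ∉ L d n (t+1) → A' p = 0 := by
    intro p hp
    rw [hA']; dsimp only; rw [if_neg hp]
  have hA'in : ∀ p, p ∈ L d n (t+1) → A' p = af p := by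
    intro p hp
    rw [hA']; dsimp only; rw [if_pos hp]
  have hker' : ∀ qv, ∑ p ∈ box d n, A' p * rowv d n γ p qv = 0 := by
    intro qv
    have hterm : ∀ p ∈ box d n,
        A' p * rowv d n γ p qv = (if p ∈ L d n (t+1) then w p qv else 0) := by
      intro p hp
      by_cases hpL : p ∈ L d n (t+1)
      · rw [if_pos hpL, hA'in p hpL]
        exact (haf p hpL qv).symm
      · rw [if_neg hpL, hA'supp p hpL, zero_mul]
    rw [Finset.sum_congr rfl hterm]
    have hgen : ∀ p, (if p ∈ L d n (t+1) then w p qv else 0) ≠ 0 →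
        p ∈ L d n (t+1) ∧ EdgeT d n t p qv := by
      intro p hne
      by_cases hpL : p ∈ L d n (t+1)
      · rw [if_pos hpL] at hne
        refine ⟨hpL, ?_⟩
        by_contra hc
        exact hne (hsupp p qv hc)
      · rw [if_neg hpL] at hne
        exact absurd rfl hne
    by_cases hVt : qv ∈ Vset d n ∧ sum1 qv = t
    · rcases hVt.1 with hD | hB
      · have hqvL : qv ∈ L d n t := ⟨hD, hVt.2⟩
        have e : ∀ p ∈ box d n, (if p ∈ L d n (t+1) then w p qv else 0)
            = (if EdgeT d n t qv p then
                (if p ∈ L d n (t+1) then w p qv else 0) else 0) := by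
          intro p hp
          by_cases he : EdgeT d n t qv p
          · rw [if_pos he]
          · rw [if_neg he]
            by_cases hpL : p ∈ L d n (t+1)
            · rw [if_pos hpL, hsym]
              exact hsupp qv p he
            · rw [if_neg hpL]
        rw [Finset.sum_congr rfl e,
          sum_edge_Lt hqvL (fun p => if p ∈ L d n (t+1) then w p qv else 0)]
        have e2 : ∀ i : Fin d, (if qv + eI d i ∈ L d n (t+1) then w (qv + eI d i) qv else 0)
            = w qv (qv + eI d i) := by
          intro i
          rcases L_up_mem hqvL i with hL | hKp
          · rw [if_pos hL, hsym]
          · rw [if_neg (fun hc => hKp.1.1.1 hc.1)]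
            exact ((hsym qv (qv + eI d i)).trans
              (hb _ hKp qv (edgeT_symm ((edgeT_Lt_char hqvL).2 ⟨i, rfl⟩)))).symm
        rw [Finset.sum_congr rfl (fun i _ => e2 i)]
        exact hHzero qv hqvL
      · obtain ⟨i, hcase, hrest⟩ := bset_spec hB
        apply Finset.sum_eq_zero
        intro p hpbox
        by_cases hne : (if p ∈ L d n (t+1) then w p qv else 0) = 0
        · exact hne
        exfalso
        obtain ⟨hpL, he⟩ := hgen p hne
        obtain ⟨m, hm⟩ := (edgeT_Lt1_char hpL).1 he
        rcases hcase with ⟨h0, hD2⟩ | ⟨h0, hD2⟩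
        · have hqvKm : qv ∈ Km d n t := ⟨⟨hB, hVt.2⟩, i, h0⟩
          have hz : w qv p = 0 := hKmzero _ hqvKm p (edgeT_symm he)
          rw [if_pos hpL] at hne
          exact hne (by rw [hsym]; exact hz)
        · have hqvKp : qv ∈ Kp d n t := ⟨⟨hB, hVt.2⟩, i, h0⟩
          rw [hm] at hqvKp
          exact interior_up_not_kp hpL.1 m hqvKp
    · apply Finset.sum_eq_zero
      intro p hpbox
      by_contra hne
      obtain ⟨hpL, he⟩ := hgen p hne
      obtain ⟨m, hm⟩ := (edgeT_Lt1_char hpL).1 he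
      refine hVt ⟨he.1.2.2.1, ?_⟩
      rw [hm, sum1_sub_eI, hpL.2]
      ring
  have hzeroA := indep_rows hd1 hγ (t+1) A' hA'supp hker'
  have hLzero : ∀ p, p ∈ L d n (t+1) → ∀ q, w p q = 0 := by
    intro p hpL q
    rw [haf p hpL q, ← hA'in p hpL, hzeroA p, zero_mul]
  intro a b
  by_cases he : EdgeT d n t a b
  · rcases he.2 with ⟨h1, h2⟩ | ⟨h1, h2⟩ | ⟨h1, h2⟩ | ⟨h1, h2⟩ | ⟨h1, h2⟩ | ⟨h1, h2⟩
    · rw [hsym]; exact hLzero b h2 a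
    · exact hLzero a h2 b
    · rw [hsym]; exact hb b h2 a (edgeT_symm he)
    · exact hb a h2 b he
    · rw [hsym]; exact hLzero b h2 a
    · exact hLzero a h2 b
  · exact hsupp a b he

end DiscreteCalderon
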